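/- Let N ≥ 1 be an integer. Work with real symmetric matrices of order N+2 and let e_1, …, e_{N+2} denote the standard unit (column) vectors of ℝ^{N+2}. For 1 ≤ i < j ≤ N+1 set ξ_{ij} = (e_i − e_{i+1}) − (e_j − e_{j+1}) and A_{i,j} = (e_{i+1} − e_{j+1})ξ_{ij}ᵀ + ξ_{ij}(e_{i+1} − e_{j+1})ᵀ; for 1 ≤ i ≤ N+1 set B_i = e_{i+1}(e_i − e_{i+1})ᵀ + (e_i − e_{i+1})e_{i+1}ᵀ; set C = (e_{N+1} − e_{N+2})(e_{N+1} − e_{N+2})ᵀ and E_{11} = e_1 e_1ᵀ. Define multipliers λ_{i,j} = (N/(N+1))^{N−i} · i/(N+1) if j = i+1 with 1 ≤ i ≤ N, and λ_{i,j} = 0 otherwise; μ_i = (N/(N+1))^{N−i} · (N−i)/(N+1)² for 1 ≤ i ≤ N; μ_{N+1} = 1/(N+1); and η = (N/(N+1))^N · 1/(N+1). Then the matrix M = η·E_{11} − C − Σ_{1 ≤ i < j ≤ N+1} λ_{i,j}·A_{i,j} − Σ_{i=1}^{N+1} μ_i·B_i is positive semidefinite. -/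

import Mathlib

open Matrix

/-- The `k`-th standard unit vector of `ℝ^(N+2)`, with 1-based index `k ∈ {1, …, N+2}`. -/
noncomputable def pepUnitVec (N : ℕ) (k : ℕ) : Fin (N + 2) → ℝ :=
  fun m => if (m : ℕ) + 1 = k then 1 else 0

/-- `ξ_{ij} = (e_i − e_{i+1}) − (e_j − e_{j+1})`. -/
noncomputable def pepXi (N : ℕ) (i j : ℕ) : Fin (N + 2) → ℝ :=
  (pepUnitVec N i - pepUnitVec N (i + 1)) - (pepUnitVec N j - pepUnitVec N (j + 1))

/-- `A_{i,j} = (e_{i+1} − e_{j+1})ξ_{ij}ᵀ + ξ_{ij}(e_{i+1} − e_{j+1})ᵀ`. -/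
noncomputable def pepMatA (N : ℕ) (i j : ℕ) : Matrix (Fin (N + 2)) (Fin (N + 2)) ℝ :=
  vecMulVec (pepUnitVec N (i + 1) - pepUnitVec N (j + 1)) (pepXi N i j) +
    vecMulVec (pepXi N i j) (pepUnitVec N (i + 1) - pepUnitVec N (j + 1))

/-- `B_i = e_{i+1}(e_i − e_{i+1})ᵀ + (e_i − e_{i+1})e_{i+1}ᵀ`. -/
noncomputable def pepMatB (N : ℕ) (i : ℕ) : Matrix (Fin (N + 2)) (Fin (N + 2)) ℝ :=
  vecMulVec (pepUnitVec N (i + 1)) (pepUnitVec N i - pepUnitVec N (i + 1)) +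
    vecMulVec (pepUnitVec N i - pepUnitVec N (i + 1)) (pepUnitVec N (i + 1))

/-- `C = (e_{N+1} − e_{N+2})(e_{N+1} − e_{N+2})ᵀ`. -/
noncomputable def pepMatC (N : ℕ) : Matrix (Fin (N + 2)) (Fin (N + 2)) ℝ :=
  vecMulVec (pepUnitVec N (N + 1) - pepUnitVec N (N + 2))
    (pepUnitVec N (N + 1) - pepUnitVec N (N + 2))

/-- `E_{11} = e_1 e_1ᵀ`. -/
noncomputable def pepMatE11 (N : ℕ) : Matrix (Fin (N + 2)) (Fin (N + 2)) ℝ :=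
  vecMulVec (pepUnitVec N 1) (pepUnitVec N 1)

/-- Dual multipliers `λ_{i,j}`. -/
noncomputable def pepLam (N : ℕ) (i j : ℕ) : ℝ :=
  if j = i + 1 ∧ 1 ≤ i ∧ i ≤ N then ((N : ℝ) / ((N : ℝ) + 1)) ^ (N - i) * i / ((N : ℝ) + 1)
  else 0

/-- Dual multipliers `μ_i`. -/
noncomputable def pepMu (N : ℕ) (i : ℕ) : ℝ :=
  if i = N + 1 then 1 / ((N : ℝ) + 1)
  else ((N : ℝ) / ((N : ℝ) + 1)) ^ (N - i) * ((N : ℝ) - (i : ℝ)) / ((N : ℝ) + 1) ^ 2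

/-- Dual multiplier `η = (N/(N+1))^N · 1/(N+1)`. -/
noncomputable def pepEta (N : ℕ) : ℝ :=
  ((N : ℝ) / ((N : ℝ) + 1)) ^ N * (1 / ((N : ℝ) + 1))

/-! ### Auxiliary material for the proof -/

/-- Cholesky coefficients `c_k = (N/(N+1))^(N+1-k) · k/(N+1)`. -/
noncomputable def pepCcoef (N : ℕ) (k : ℕ) : ℝ :=
  ((N : ℝ) / ((N : ℝ) + 1)) ^ (N + 1 - k) * (k : ℝ) / ((N : ℝ) + 1)

/-- Cholesky vectors `v_k = e_k − 2 e_{k+1} + ((N+1)/N) e_{k+2}`. -/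
noncomputable def pepVvec (N : ℕ) (k : ℕ) : Fin (N + 2) → ℝ :=
  pepUnitVec N k - (2 : ℝ) • pepUnitVec N (k + 1) + (((N : ℝ) + 1) / (N : ℝ)) • pepUnitVec N (k + 2)

/-- Telescoping block matrices. -/
noncomputable def pepTmat (N : ℕ) (j : ℕ) : Matrix (Fin (N + 2)) (Fin (N + 2)) ℝ :=
  (((N : ℝ) / ((N : ℝ) + 1)) ^ (N - j) * ((j : ℝ) + 1) / ((N : ℝ) + 1)) •
      vecMulVec (pepUnitVec N (j + 1)) (pepUnitVec N (j + 1)) -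
    (((N : ℝ) / ((N : ℝ) + 1)) ^ (N - j) * (j : ℝ) / ((N : ℝ) + 1)) •
      (vecMulVec (pepUnitVec N (j + 1)) (pepUnitVec N (j + 2)) +
        vecMulVec (pepUnitVec N (j + 2)) (pepUnitVec N (j + 1))) +
    (((N : ℝ) / ((N : ℝ) + 1)) ^ (N - j) * (j : ℝ) * ((N : ℝ) - 1) / ((N : ℝ) * ((N : ℝ) + 1))) •
      vecMulVec (pepUnitVec N (j + 2)) (pepUnitVec N (j + 2))

lemma pepTmat_zero (N : ℕ) : pepTmat N 0 = pepEta N • pepMatE11 N := by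
  simp [pepTmat, pepEta, pepMatE11, mul_comm, div_eq_mul_inv]

lemma pepTmat_last (N : ℕ) (hN : 1 ≤ N) :
    pepTmat N N = pepMatC N + pepMu N (N + 1) • pepMatB N (N + 1) := by
  have hN0 : ((N : ℝ)) ≠ 0 := by positivity
  have hN1 : ((N : ℝ) + 1) ≠ 0 := by positivity
  unfold pepTmat pepMatC pepMatB pepMu
  rw [if_pos rfl]
  ext a b
  simp only [Matrix.sub_apply, Matrix.add_apply, Matrix.smul_apply, vecMulVec_apply,
    Pi.sub_apply, pepUnitVec, smul_eq_mul, Nat.sub_self, pow_zero]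
  split_ifs <;> first | omega | (field_simp; try ring)

set_option maxHeartbeats 2000000 in
lemma pepStep (N k : ℕ) (hk : k < N) :
    pepTmat N k - pepTmat N (k + 1) =
      pepLam N (k + 1) (k + 2) • pepMatA N (k + 1) (k + 2) +
        pepMu N (k + 1) • pepMatB N (k + 1) +
        pepCcoef N (k + 1) • vecMulVec (pepVvec N (k + 1)) (pepVvec N (k + 1)) := by
  obtain ⟨m, hm⟩ : ∃ m, N = k + 1 + m := ⟨N - (k + 1), by omega⟩
  subst hm
  have e1 : k + 1 + m - k = m + 1 := by omega
  have e2 : k + 1 + m - (k + 1) = m := by omega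
  have e3 : k + 1 + m + 1 - (k + 1) = m + 1 := by omega
  have hx : ((k : ℝ) + 1 + (m : ℝ)) ≠ 0 := by positivity
  have hy : ((k : ℝ) + 1 + (m : ℝ) + 1) ≠ 0 := by positivity
  unfold pepTmat pepLam pepMu pepCcoef pepMatA pepMatB pepVvec pepXi
  rw [if_pos ⟨rfl, by omega, by omega⟩, if_neg (by omega), e1, e2, e3]
  simp only [show k + 1 + 1 = k + 2 by omega, show k + 2 + 1 = k + 3 by omega,
    show k + 1 + 2 = k + 3 by omega]
  ext a b
  simp only [Matrix.sub_apply, Matrix.add_apply, Matrix.smul_apply, vecMulVec_apply,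
    Pi.sub_apply, Pi.add_apply, Pi.smul_apply, pepUnitVec, smul_eq_mul]
  push_cast
  split_ifs <;> first | omega | (rw [div_pow, div_pow]; field_simp; ring)

lemma pep_psd_smul_vmv {n : ℕ} (c : ℝ) (hc : 0 ≤ c) (v : Fin n → ℝ) :
    (c • vecMulVec v v).PosSemidef := by
  rw [Matrix.posSemidef_iff_dotProduct_mulVec]
  constructor
  · ext a b
    simp [Matrix.conjTranspose_apply, vecMulVec_apply, mul_comm]
  · intro x
    have hmv : vecMulVec v v *ᵥ x = (v ⬝ᵥ x) • v := by
      ext a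
      simp only [mulVec, dotProduct, vecMulVec_apply, Pi.smul_apply, smul_eq_mul,
        Finset.mul_sum, Finset.sum_mul]
      exact Finset.sum_congr rfl fun i _ => by ring
    rw [smul_mulVec, hmv, dotProduct_smul, dotProduct_smul]
    have : star x ⬝ᵥ v = v ⬝ᵥ x := by simp [dotProduct, mul_comm]
    rw [this]
    simp only [smul_eq_mul]
    have := mul_self_nonneg (v ⬝ᵥ x)
    nlinarith

lemma pepCcoef_nonneg (N k : ℕ) : 0 ≤ pepCcoef N k := by
  unfold pepCcoef
  positivity

lemma pep_sum_Icc_shift {M : Type*} [AddCommMonoid M] (N : ℕ) (f : ℕ → M) :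
    ∑ i ∈ Finset.Icc 1 N, f i = ∑ k ∈ Finset.range N, f (k + 1) := by
  rw [← Finset.Ico_add_one_right_eq_Icc, Finset.sum_Ico_eq_sum_range]
  simp [add_comm]

/-- Proposition 1: the dual slack matrix
`M = η·E₁₁ − C − Σ_{1≤i<j≤N+1} λ_{i,j}·A_{i,j} − Σ_{i=1}^{N+1} μ_i·B_i`
is positive semidefinite. -/
theorem pep_dual_slack_posSemidef (N : ℕ) (hN : 1 ≤ N) :
    (pepEta N • pepMatE11 N - pepMatC N -
      (∑ i ∈ Finset.Icc 1 (N + 1), ∑ j ∈ Finset.Ioc i (N + 1), pepLam N i j • pepMatA N i j) -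
      (∑ i ∈ Finset.Icc 1 (N + 1), pepMu N i • pepMatB N i)).PosSemidef := by
  have hA : (∑ i ∈ Finset.Icc 1 (N + 1), ∑ j ∈ Finset.Ioc i (N + 1),
      pepLam N i j • pepMatA N i j) =
      ∑ k ∈ Finset.range N, pepLam N (k + 1) (k + 2) • pepMatA N (k + 1) (k + 2) := by
    rw [pep_sum_Icc_shift]
    rw [Finset.sum_range_succ]
    have hlast : ∑ j ∈ Finset.Ioc (N + 1) (N + 1), pepLam N (N + 1) j • pepMatA N (N + 1) j
        = 0 := by simp
    rw [hlast, add_zero]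
    refine Finset.sum_congr rfl fun k hk => ?_
    have hkN : k < N := Finset.mem_range.mp hk
    refine Finset.sum_eq_single_of_mem (k + 2) (by simp [Finset.mem_Ioc]; omega) ?_
    intro j hj hne
    rw [pepLam, if_neg, zero_smul]
    rintro ⟨h, -⟩
    exact hne (by omega)
  have hB : (∑ i ∈ Finset.Icc 1 (N + 1), pepMu N i • pepMatB N i) =
      (∑ k ∈ Finset.range N, pepMu N (k + 1) • pepMatB N (k + 1)) +
        pepMu N (N + 1) • pepMatB N (N + 1) := by
    rw [pep_sum_Icc_shift, Finset.sum_range_succ]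
  have htel : ∑ k ∈ Finset.range N, (pepTmat N k - pepTmat N (k + 1)) =
      pepTmat N 0 - pepTmat N N := Finset.sum_range_sub' (pepTmat N) N
  have hstep : ∑ k ∈ Finset.range N, (pepTmat N k - pepTmat N (k + 1)) =
      (∑ k ∈ Finset.range N, pepLam N (k + 1) (k + 2) • pepMatA N (k + 1) (k + 2)) +
      (∑ k ∈ Finset.range N, pepMu N (k + 1) • pepMatB N (k + 1)) +
      (∑ k ∈ Finset.range N,
        pepCcoef N (k + 1) • vecMulVec (pepVvec N (k + 1)) (pepVvec N (k + 1))) := by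
    rw [← Finset.sum_add_distrib, ← Finset.sum_add_distrib]
    exact Finset.sum_congr rfl fun k hk => pepStep N k (Finset.mem_range.mp hk)
  have hmain : pepEta N • pepMatE11 N - pepMatC N -
      (∑ i ∈ Finset.Icc 1 (N + 1), ∑ j ∈ Finset.Ioc i (N + 1), pepLam N i j • pepMatA N i j) -
      (∑ i ∈ Finset.Icc 1 (N + 1), pepMu N i • pepMatB N i) =
      ∑ k ∈ Finset.range N,
        pepCcoef N (k + 1) • vecMulVec (pepVvec N (k + 1)) (pepVvec N (k + 1)) := by
    have h2 := pepTmat_last N hN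
    rw [htel] at hstep
    rw [hA, hB, ← pepTmat_zero N, eq_add_of_sub_eq hstep, h2]
    abel
  rw [hmain]
  refine Finset.sum_induction _ _ (fun a b ha hb => ha.add hb) Matrix.PosSemidef.zero ?_
  intro k _
  exact pep_psd_smul_vmv _ (pepCcoef_nonneg N (k + 1)) _
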